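/- Let G = (P₁ × ⋯ × P_{s-1}) × (P_s ⋊ (Q₁ × ⋯ × Q_t)) be a finite group, where P₁,…,P_s are normal Sylow subgroups of G (s ≥ 1), Q₁,…,Q_t are non-normal Sylow subgroups of G (t ≥ 1), and there exists a subgroup E of P_s normal in G such that E(Q₁ × ⋯ × Q_t) is a nilpotent maximal subgroup of P_s ⋊ (Q₁ × ⋯ × Q_t). Then every maximal subgroup of G containing the normalizer of some Sylow subgroup of G is nilpotent. -/

import Mathlib

open Subgroup

section H1
variable {G : Type*} [Group G]

private def auxMulHom (A B : Subgroup G) (hc : ∀ x ∈ A, ∀ y ∈ B, Commute x y) :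
    A × B →* G where
  toFun x := (x.1 : G) * x.2
  map_one' := by simp
  map_mul' := by
    rintro ⟨a1, b1⟩ ⟨a2, b2⟩
    have h := hc a2 a2.2 b1 b1.2
    simp only [Prod.mk_mul_mk, Subgroup.coe_mul]
    simp only [← mul_assoc]
    rw [mul_assoc ((a1 : G)), h.eq, ← mul_assoc]

private lemma auxMulHom_range (A B : Subgroup G) (hc : ∀ x ∈ A, ∀ y ∈ B, Commute x y) :
    (auxMulHom A B hc).range = A ⊔ B := by
  apply le_antisymm
  · rintro x ⟨⟨a, b⟩, rfl⟩
    exact mul_mem (le_sup_left (a := A) a.2) (le_sup_right (a := A) b.2)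
  · refine sup_le ?_ ?_
    · intro a ha
      exact ⟨(⟨⟨a, ha⟩, 1⟩ : A × B), by simp [auxMulHom]⟩
    · intro b hb
      exact ⟨(⟨1, ⟨b, hb⟩⟩ : A × B), by simp [auxMulHom]⟩

lemma aux_join_nilpotent (A B : Subgroup G)
    (hc : ∀ x ∈ A, ∀ y ∈ B, Commute x y)
    (hA : Group.IsNilpotent A) (hB : Group.IsNilpotent B) :
    Group.IsNilpotent ↥(A ⊔ B) := by
  have : Group.IsNilpotent (auxMulHom A B hc).range :=
    nilpotent_of_surjective _ (auxMulHom A B hc).rangeRestrict_surjective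
  rwa [auxMulHom_range] at this

lemma aux_card_join_dvd_of_commute [Finite G] (A B : Subgroup G)
    (hc : ∀ x ∈ A, ∀ y ∈ B, Commute x y) :
    Nat.card ↥(A ⊔ B) ∣ Nat.card A * Nat.card B := by
  rw [← auxMulHom_range A B hc, ← Nat.card_prod]
  have e := QuotientGroup.quotientKerEquivRange (auxMulHom A B hc)
  rw [← Nat.card_congr e.toEquiv]
  exact Subgroup.card_quotient_dvd_card _

end H1

section Helpers2
variable {G : Type*} [Group G]



lemma aux_le_normalizer_of_commute {B A : Subgroup G}
    (h : ∀ x ∈ B, ∀ y ∈ A, Commute x y) : B ≤ Subgroup.normalizer (A : Set G) := by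
  intro x hx
  rw [Subgroup.mem_normalizer_iff]
  intro y
  constructor
  · intro hy
    have hxy := (h x hx y hy).eq
    rw [hxy, mul_assoc, mul_inv_cancel, mul_one]
    exact hy
  · intro hy
    have hz := (h x hx _ hy).eq
    have h2 : x * (x * y * x⁻¹) = x * y := by rw [hz]; group
    have h3 : x * y * x⁻¹ = y := mul_left_cancel h2
    exact h3 ▸ hy

lemma aux_card_join_dvd_of_normal [Finite G] (A B : Subgroup G) (hA : A.Normal) :
    Nat.card ↥(A ⊔ B) ∣ Nat.card A * Nat.card B := by
  classical
  haveI := hA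
  set f : ↥(A ⊔ B) →* G ⧸ A := (QuotientGroup.mk' A).comp (A ⊔ B).subtype with hf
  have hker : f.ker = A.subgroupOf (A ⊔ B) := by
    rw [hf, ← MonoidHom.comap_ker, QuotientGroup.ker_mk']
    rfl
  have h1 : Nat.card ↥(A ⊔ B) = Nat.card (↥(A ⊔ B) ⧸ f.ker) * Nat.card f.ker :=
    Subgroup.card_eq_card_quotient_mul_card_subgroup _
  have h2 : Nat.card f.ker = Nat.card A := by
    rw [hker]
    exact Nat.card_congr (Subgroup.subgroupOfEquivOfLe le_sup_left).toEquiv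
  have h3 : Nat.card (↥(A ⊔ B) ⧸ f.ker) = Nat.card f.range :=
    Nat.card_congr (QuotientGroup.quotientKerEquivRange f).toEquiv
  have h4 : Nat.card f.range ∣ Nat.card B := by
    have hr : f.range ≤ ((QuotientGroup.mk' A).comp B.subtype).range := by
      rintro x ⟨⟨y, hy⟩, rfl⟩
      have hy' : y ∈ (↑(A ⊔ B) : Set G) := hy
      rw [Subgroup.normal_mul A B] at hy'
      obtain ⟨a, ha, b, hb, rfl⟩ := hy'
      refine ⟨⟨b, hb⟩, ?_⟩
      simp only [MonoidHom.comp_apply, hf, Subgroup.coe_subtype]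
      rw [QuotientGroup.mk'_apply, QuotientGroup.mk'_apply, QuotientGroup.eq]
      have := hA.conj_mem a ha b⁻¹
      simpa [mul_assoc] using this
    calc Nat.card f.range ∣ Nat.card ((QuotientGroup.mk' A).comp B.subtype).range :=
          Subgroup.card_dvd_of_le hr
      _ ∣ Nat.card B := by
          rw [← Nat.card_congr (QuotientGroup.quotientKerEquivRange _).toEquiv]
          exact Subgroup.card_quotient_dvd_card _
  rw [h1, h2, h3, mul_comm]
  exact mul_dvd_mul dvd_rfl h4


end Helpers2

section Helpers3
variable {G : Type*} [Group G]

lemma aux_iSup_normal {ι : Sort*} (A : ι → Subgroup G) (h : ∀ i, (A i).Normal) :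
    (⨆ i, A i).Normal := by
  constructor
  intro n hn g
  refine Subgroup.iSup_induction A (C := fun x => g * x * g⁻¹ ∈ ⨆ i, A i) hn ?_ ?_ ?_
  · intro i x hx
    exact le_iSup A i ((h i).conj_mem x hx g)
  · simpa using one_mem (⨆ i, A i)
  · intro x y hx hy
    have : g * (x * y) * g⁻¹ = (g * x * g⁻¹) * (g * y * g⁻¹) := by group
    rw [this]
    exact mul_mem hx hy

lemma aux_commute_of_biSup {ι : Type*} (A : ι → Subgroup G) (F : Finset ι) (a : ι)
    (ha : a ∉ F) (hc : ∀ i j, i ≠ j → ∀ x ∈ A i, ∀ y ∈ A j, Commute x y) :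
    ∀ x ∈ A a, ∀ y ∈ (⨆ i ∈ F, A i), Commute x y := by
  intro x hx y hy
  have hle : (⨆ i ∈ F, A i) ≤ Subgroup.centralizer (A a) := by
    refine iSup_le fun j => iSup_le fun hj => ?_
    intro z hz
    rw [Subgroup.mem_centralizer_iff]
    intro g hg
    exact hc a j (fun h => ha (h ▸ hj)) g hg z hz
  exact (Subgroup.mem_centralizer_iff.mp (hle hy)) x hx

lemma aux_iSup_nilpotent {ι : Type*} [Fintype ι] (A : ι → Subgroup G)
    (hc : ∀ i j, i ≠ j → ∀ x ∈ A i, ∀ y ∈ A j, Commute x y)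
    (hA : ∀ i, Group.IsNilpotent (A i)) :
    Group.IsNilpotent ↥(⨆ i, A i) := by
  classical
  have key : ∀ F : Finset ι, Group.IsNilpotent ↥(⨆ i ∈ F, A i) := by
    intro F
    induction F using Finset.induction with
    | empty =>
      rw [show (⨆ i ∈ (∅ : Finset ι), A i) = ⊥ by simp]
      infer_instance
    | @insert a F ha ih =>
      rw [show (⨆ i ∈ insert a F, A i) = A a ⊔ ⨆ i ∈ F, A i from Finset.iSup_insert a F A]
      exact aux_join_nilpotent (A a) _ (aux_commute_of_biSup A F a ha hc) (hA a) ih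
  have := key Finset.univ
  rwa [show (⨆ i ∈ Finset.univ, A i) = ⨆ i, A i by simp] at this

lemma aux_iSup_card_dvd_of_commute [Finite G] {ι : Type*} [Fintype ι] (A : ι → Subgroup G)
    (hc : ∀ i j, i ≠ j → ∀ x ∈ A i, ∀ y ∈ A j, Commute x y) :
    Nat.card ↥(⨆ i, A i) ∣ ∏ i, Nat.card (A i) := by
  classical
  have key : ∀ F : Finset ι, Nat.card ↥(⨆ i ∈ F, A i) ∣ ∏ i ∈ F, Nat.card (A i) := by
    intro F
    induction F using Finset.induction with
    | empty => simp
    | @insert a F ha ih =>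
      rw [show (⨆ i ∈ insert a F, A i) = A a ⊔ ⨆ i ∈ F, A i from Finset.iSup_insert a F A,
        Finset.prod_insert ha]
      exact dvd_trans
        (aux_card_join_dvd_of_commute _ _ (aux_commute_of_biSup A F a ha hc))
        (mul_dvd_mul dvd_rfl ih)
  have := key Finset.univ
  rwa [show (⨆ i ∈ Finset.univ, A i) = ⨆ i, A i by simp] at this

lemma aux_iSup_card_dvd_of_normal [Finite G] {ι : Type*} [Fintype ι] (A : ι → Subgroup G)
    (hn : ∀ i, (A i).Normal) :
    Nat.card ↥(⨆ i, A i) ∣ ∏ i, Nat.card (A i) := by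
  classical
  have key : ∀ F : Finset ι, Nat.card ↥(⨆ i ∈ F, A i) ∣ ∏ i ∈ F, Nat.card (A i) := by
    intro F
    induction F using Finset.induction with
    | empty => simp
    | @insert a F ha ih =>
      rw [show (⨆ i ∈ insert a F, A i) = A a ⊔ ⨆ i ∈ F, A i from Finset.iSup_insert a F A,
        Finset.prod_insert ha]
      exact dvd_trans (aux_card_join_dvd_of_normal (A a) _ (hn a))
        (mul_dvd_mul dvd_rfl ih)
  have := key Finset.univ
  rwa [show (⨆ i ∈ Finset.univ, A i) = ⨆ i, A i by simp] at this

end Helpers3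
open Subgroup

section Helpers4
variable {W : Type*} [Group W]

lemma aux_zpowers_isPGroup {p : ℕ} [Fact p.Prime] {x : W} {n : ℕ} (hx : x ^ p ^ n = 1) :
    IsPGroup p (Subgroup.zpowers x) := by
  intro g
  obtain ⟨m, hm⟩ := Subgroup.mem_zpowers_iff.mp g.2
  refine ⟨n, ?_⟩
  have : (g : W) ^ p ^ n = 1 := by
    rw [← hm, ← zpow_natCast, ← zpow_mul, mul_comm, zpow_mul, zpow_natCast, hx, one_zpow]
  exact Subtype.ext (by simpa using this)

lemma aux_commute_of_nilpotent [Finite W] (hW : Group.IsNilpotent W)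
    {p q : ℕ} [Fact p.Prime] [Fact q.Prime] (hpq : p ≠ q) {x y : W}
    (hx : ∃ n, x ^ p ^ n = 1) (hy : ∃ n, y ^ q ^ n = 1) : Commute x y := by
  obtain ⟨n, hxn⟩ := hx
  obtain ⟨m, hym⟩ := hy
  obtain ⟨S, hS⟩ := (aux_zpowers_isPGroup hxn).exists_le_sylow
  obtain ⟨T, hT⟩ := (aux_zpowers_isPGroup hym).exists_le_sylow
  have hnorm : ∀ (r : ℕ) (_ : Fact r.Prime) (R : Sylow r W), (R : Subgroup W).Normal :=
    ((isNilpotent_of_finite_tfae (G := W)).out 0 3).mp hW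
  have hdis : Disjoint (S : Subgroup W) (T : Subgroup W) :=
    IsPGroup.disjoint_of_ne p q hpq _ _ S.isPGroup' T.isPGroup'
  exact Subgroup.commute_of_normal_of_disjoint _ _ (hnorm p ‹_› S) (hnorm q ‹_› T) hdis x y
    (hS (Subgroup.mem_zpowers x)) (hT (Subgroup.mem_zpowers y))

end Helpers4

section Helpers5
variable {G : Type*} [Group G]

open scoped Pointwise

lemma aux_smul_top (g : MulAut G) : g • (⊤ : Subgroup G) = ⊤ := by
  ext x
  simp only [Subgroup.mem_pointwise_smul_iff_inv_smul_mem, Subgroup.mem_top]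

lemma aux_smul_normalizer (g : G) (A : Subgroup G) :
    MulAut.conj g • Subgroup.normalizer (A : Set G) = Subgroup.normalizer ((MulAut.conj g • A : Subgroup G) : Set G) := by
  have h1 : ∀ B : Subgroup G, MulAut.conj g • B = B.map (MulAut.conj g).toMonoidHom :=
    fun B => rfl
  rw [h1, h1]
  exact Subgroup.map_normalizer_eq_of_bijective A (MulAut.conj g).bijective

lemma aux_smul_nilpotent (g : G) (A : Subgroup G) (hA : Group.IsNilpotent A) :
    Group.IsNilpotent ↥(MulAut.conj g • A) := by
  have h1 : MulAut.conj g • A = A.map (MulAut.conj g).toMonoidHom := rfl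
  rw [h1]
  haveI := hA
  exact nilpotent_of_mulEquiv (MulEquiv.subgroupMap (MulAut.conj g) A)

end Helpers5

open scoped Pointwise

theorem stmt_15 (G : Type*) [Group G] [Finite G]
    (s t : ℕ) (hs : 1 ≤ s) (ht : 1 ≤ t)
    (p : Fin s → ℕ) (q : Fin t → ℕ)
    (hp : ∀ i, (p i).Prime) (hq : ∀ j, (q j).Prime)
    (hpinj : Function.Injective p) (hqinj : Function.Injective q)
    (hpq : ∀ i j, p i ≠ q j)
    (P : ∀ i, Sylow (p i) G) (Q : ∀ j, Sylow (q j) G)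
    (hPn : ∀ i, (P i : Subgroup G).Normal)
    (hQn : ∀ j, ¬ (Q j : Subgroup G).Normal)
    -- the Sylow subgroups P i, Q j generate G
    (htop : ((⨆ i, (P i : Subgroup G)) ⊔ ⨆ j, (Q j : Subgroup G)) = ⊤)
    -- the Q j's pairwise commute, so that K := Q₁ × ⋯ × Q_t is their internal direct product
    (hQcomm : ∀ j j' : Fin t, j ≠ j' → ∀ x y : G, x ∈ Q j → y ∈ Q j' → Commute x y)
    -- P i for i ≠ s-1 is a direct factor: it centralizes P_s ⋊ (Q₁ × ⋯ × Q_t)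
    (hcent : ∀ i : Fin s, i ≠ ⟨s - 1, by omega⟩ → ∀ x y : G, x ∈ P i →
      y ∈ ((P ⟨s - 1, by omega⟩ : Subgroup G) ⊔ ⨆ j, (Q j : Subgroup G)) → Commute x y)
    (E : Subgroup G) (hE : E ≤ (P ⟨s - 1, by omega⟩ : Subgroup G)) (hEn : E.Normal)
    (hEKnil : Group.IsNilpotent ↥(E ⊔ ⨆ j, (Q j : Subgroup G)))
    -- E(Q₁ × ⋯ × Q_t) is maximal in P_s ⋊ (Q₁ × ⋯ × Q_t)
    (hEKmax : IsCoatom ((E ⊔ ⨆ j, (Q j : Subgroup G)).subgroupOf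
      ((P ⟨s - 1, by omega⟩ : Subgroup G) ⊔ ⨆ j, (Q j : Subgroup G)))) :
    ∀ M : Subgroup G, IsCoatom M →
      (∃ (r : ℕ) (_ : Fact r.Prime) (R : Sylow r G), Subgroup.normalizer ((R : Subgroup G) : Set G) ≤ M) →
      Group.IsNilpotent M := by
  classical
  intro M hM hex
  obtain ⟨r, hrF, R, hRM⟩ := hex
  haveI := hrF
  set i₀ : Fin s := ⟨s - 1, by omega⟩ with hi₀
  set K : Subgroup G := ⨆ j, (Q j : Subgroup G) with hKdef
  set Ps : Subgroup G := (P i₀ : Subgroup G) with hPsdef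
  set Hh : Subgroup G := Ps ⊔ K with hHdef
  set L : Subgroup G := E ⊔ K with hLdef
  set N : Subgroup G := ⨆ i : {i : Fin s // i ≠ i₀}, (P i.1 : Subgroup G) with hNdef
  -- R is not normal
  have hRnn : ¬ (R : Subgroup G).Normal := by
    intro h
    exact hM.1 (top_le_iff.mp (le_trans (le_of_eq (Subgroup.normalizer_eq_top_iff.mpr h).symm) hRM))
  -- r = q j for some j
  have hrq : ∃ j, r = q j := by
    by_contra hcon
    push_neg at hcon
    by_cases hrp : ∃ i, r = p i
    · obtain ⟨i, rfl⟩ := hrp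
      haveI := Fact.mk (hp i)
      haveI : Unique (Sylow (p i) G) := Sylow.unique_of_normal (P i) (hPn i)
      have hre : R = P i := Subsingleton.elim R (P i)
      exact hRnn (hre ▸ hPn i)
    · push_neg at hrp
      apply hRnn
      have hbot : (R : Subgroup G) = ⊥ := by
        obtain ⟨n, hcard⟩ := IsPGroup.iff_card.mp R.isPGroup'
        rcases Nat.eq_zero_or_pos n with hn | hn
        · subst hn
          exact Subgroup.card_eq_one.mp (by simpa using hcard)
        · exfalso
          have hrdvd : r ∣ Nat.card G := by
            have h0 : r ∣ Nat.card (R : Subgroup G) := by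
              rw [hcard]; exact dvd_pow_self r hn.ne'
            exact h0.trans (Subgroup.card_subgroup_dvd_card _)
          have hPnormal : (⨆ i, (P i : Subgroup G)).Normal := aux_iSup_normal _ hPn
          have h1 : Nat.card G ∣ Nat.card ↥(⨆ i, (P i : Subgroup G)) * Nat.card ↥K := by
            have := aux_card_join_dvd_of_normal (⨆ i, (P i : Subgroup G)) K hPnormal
            rwa [htop, Subgroup.card_top] at this
          have h2 : Nat.card ↥(⨆ i, (P i : Subgroup G)) ∣ ∏ i, Nat.card (P i : Subgroup G) :=
            aux_iSup_card_dvd_of_normal _ hPn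
          have h3 : Nat.card ↥K ∣ ∏ j, Nat.card (Q j : Subgroup G) :=
            aux_iSup_card_dvd_of_commute _
              (fun j j' hne x hx y hy => hQcomm j j' hne x y hx hy)
          have hdvd : r ∣ (∏ i, Nat.card (P i : Subgroup G)) * ∏ j, Nat.card (Q j : Subgroup G) :=
            hrdvd.trans (h1.trans (mul_dvd_mul h2 h3))
          have hprime : Prime r := hrF.out.prime
          rcases (Nat.Prime.dvd_mul hrF.out).mp hdvd with h | h
          · obtain ⟨i, _, hdi⟩ := hprime.exists_mem_finset_dvd h
            haveI := Fact.mk (hp i)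
            obtain ⟨k, hk⟩ := IsPGroup.iff_card.mp (P i).isPGroup'
            rw [hk] at hdi
            have hdp : r ∣ p i := hprime.dvd_of_dvd_pow hdi
            exact hrp i ((Nat.prime_dvd_prime_iff_eq hrF.out (hp i)).mp hdp)
          · obtain ⟨j, _, hdj⟩ := hprime.exists_mem_finset_dvd h
            haveI := Fact.mk (hq j)
            obtain ⟨k, hk⟩ := IsPGroup.iff_card.mp (Q j).isPGroup'
            rw [hk] at hdj
            have hdq : r ∣ q j := hprime.dvd_of_dvd_pow hdj
            exact hcon j ((Nat.prime_dvd_prime_iff_eq hrF.out (hq j)).mp hdq)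
      rw [hbot]
      infer_instance
  obtain ⟨j, rfl⟩ := hrq
  haveI := Fact.mk (hq j)
  obtain ⟨g, hg⟩ := MulAction.exists_smul_eq G (Q j) R
  have hReq : (R : Subgroup G) = MulAut.conj g • (Q j : Subgroup G) := by
    rw [← hg]; exact Sylow.coe_subgroup_smul
  -- N is normal
  have hNnormal : N.Normal := aux_iSup_normal _ (fun i => hPn i.1)
  -- N centralizes Hh
  have hNcent : N ≤ Subgroup.centralizer (Hh : Set G) := by
    refine iSup_le ?_
    rintro ⟨i, hi⟩ x hx
    rw [Subgroup.mem_centralizer_iff]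
    intro y hy
    exact ((hcent i hi x y hx hy).symm : Commute y x)
  have hLH : L ≤ Hh := sup_le (hE.trans le_sup_left) le_sup_right
  -- N nilpotent
  have hNnil : Group.IsNilpotent ↥N := by
    apply aux_iSup_nilpotent
    · rintro ⟨i1, hi1⟩ ⟨i2, hi2⟩ hne x hx y hy
      haveI := Fact.mk (hp i1); haveI := Fact.mk (hp i2)
      have hne' : p i1 ≠ p i2 := fun h => hne (Subtype.ext (hpinj h))
      exact Subgroup.commute_of_normal_of_disjoint _ _ (hPn i1) (hPn i2)
        (IsPGroup.disjoint_of_ne _ _ hne' _ _ (P i1).isPGroup' (P i2).isPGroup') x y hx hy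
    · rintro ⟨i, hi⟩
      haveI := Fact.mk (hp i)
      exact (P i).isPGroup'.isNilpotent
  set D : Subgroup G := N ⊔ L with hDdef
  have hDnil : Group.IsNilpotent ↥D := by
    refine aux_join_nilpotent _ _ ?_ hNnil hEKnil
    intro x hx y hy
    exact Commute.symm ((Subgroup.mem_centralizer_iff.mp (hNcent hx)) y (hLH hy))
  have hNH : N ⊔ Hh = ⊤ := by
    rw [eq_top_iff, ← htop]
    refine sup_le ?_ ?_
    · refine iSup_le fun i => ?_
      by_cases hi : i = i₀
      · subst hi
        exact le_trans (le_sup_left : Ps ≤ Hh) le_sup_right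
      · exact le_trans
          (le_iSup (fun i : {i : Fin s // i ≠ i₀} => (P i.1 : Subgroup G)) ⟨i, hi⟩) le_sup_left
    · exact le_trans (le_sup_right : K ≤ Hh) le_sup_right
  have hDne : D ≠ ⊤ := by
    intro h
    have hGnil : Group.IsNilpotent G := by
      haveI : Group.IsNilpotent ↥(⊤ : Subgroup G) := h ▸ hDnil
      exact nilpotent_of_mulEquiv Subgroup.topEquiv
    haveI := Fact.mk (hq ⟨0, ht⟩)
    have hall : ∀ (r : ℕ) (_hfr : Fact r.Prime) (Rr : Sylow r G), (Rr : Subgroup G).Normal :=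
      ((isNilpotent_of_finite_tfae (G := G)).out 0 3).mp hGnil
    exact hQn ⟨0, ht⟩ (hall (q ⟨0, ht⟩) (Fact.mk (hq ⟨0, ht⟩)) (Q ⟨0, ht⟩))
  have hDed : ∀ X : Subgroup G, N ≤ X → X ≤ N ⊔ (X ⊓ Hh) := by
    intro X hNX x hx
    haveI := hNnormal
    have hx' : x ∈ (↑(N ⊔ Hh) : Set G) := by rw [hNH]; trivial
    rw [Subgroup.normal_mul] at hx'
    obtain ⟨n, hn, y, hy, rfl⟩ := hx'
    have hyX : y ∈ X := by
      have := X.mul_mem (X.inv_mem (hNX hn)) hx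
      simpa using this
    exact mul_mem ((le_sup_left : N ≤ N ⊔ (X ⊓ Hh)) hn)
      ((le_sup_right : X ⊓ Hh ≤ N ⊔ (X ⊓ Hh)) (Subgroup.mem_inf.mpr ⟨hyX, hy⟩))
  have hDco : IsCoatom D := by
    refine ⟨hDne, ?_⟩
    intro X hX
    by_cases hcase : X ⊓ Hh ≤ L
    · exfalso
      have hXD : X ≤ D :=
        le_trans (hDed X (le_trans le_sup_left hX.le))
          (sup_le le_sup_left (hcase.trans le_sup_right))
      exact hX.not_ge hXD
    · have hlt : L.subgroupOf Hh < (X ⊓ Hh).subgroupOf Hh := by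
        refine lt_of_le_of_ne (Subgroup.comap_mono (le_inf (le_trans le_sup_right hX.le) hLH)) ?_
        intro heq
        apply hcase
        intro x hx
        have hxH : x ∈ Hh := hx.2
        have hmem : (⟨x, hxH⟩ : ↥Hh) ∈ (X ⊓ Hh).subgroupOf Hh := Subgroup.mem_subgroupOf.mpr hx
        rw [← heq] at hmem
        exact Subgroup.mem_subgroupOf.mp hmem
      have htop2 : (X ⊓ Hh).subgroupOf Hh = ⊤ := hEKmax.2 _ hlt
      have hHX : Hh ≤ X := le_trans (Subgroup.subgroupOf_eq_top.mp htop2) inf_le_left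
      rw [eq_top_iff, ← hNH]
      exact sup_le (le_trans le_sup_left hX.le) hHX
  -- D normalizes Q j
  have hcn : Subgroup.centralizer ((Q j : Subgroup G) : Set G) ≤ Subgroup.normalizer ((Q j : Subgroup G) : Set G) :=
    aux_le_normalizer_of_commute
      (fun x hx y hy => Commute.symm ((Subgroup.mem_centralizer_iff.mp hx) y hy))
  have hDnorm : D ≤ Subgroup.normalizer ((Q j : Subgroup G) : Set G) := by
    refine sup_le ?_ (sup_le ?_ ?_)
    · refine le_trans hNcent (le_trans (Subgroup.centralizer_le ?_) hcn)
      exact le_trans (le_iSup (fun j => (Q j : Subgroup G)) j) (le_sup_right : K ≤ Hh)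
    · intro x hx
      apply hcn
      rw [Subgroup.mem_centralizer_iff]
      intro y hy
      have hxL : x ∈ L := (le_sup_left : E ≤ L) hx
      have hyL : y ∈ L := (le_sup_right : K ≤ L) ((le_iSup (fun j => (Q j : Subgroup G)) j) hy)
      haveI := Fact.mk (hp i₀)
      have hxp : ∃ n, (⟨x, hxL⟩ : ↥L) ^ (p i₀) ^ n = 1 := by
        obtain ⟨n, hn⟩ := (P i₀).isPGroup' ⟨x, hE hx⟩
        refine ⟨n, Subtype.ext ?_⟩
        have hx1 : x ^ (p i₀) ^ n = 1 := by
          have := congrArg Subtype.val hn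
          simpa using this
        simpa using hx1
      have hyq : ∃ n, (⟨y, hyL⟩ : ↥L) ^ (q j) ^ n = 1 := by
        obtain ⟨n, hn⟩ := (Q j).isPGroup' ⟨y, hy⟩
        refine ⟨n, Subtype.ext ?_⟩
        have hy1 : y ^ (q j) ^ n = 1 := by
          have := congrArg Subtype.val hn
          simpa using this
        simpa using hy1
      have hC : Commute (⟨x, hxL⟩ : ↥L) ⟨y, hyL⟩ :=
        aux_commute_of_nilpotent hEKnil (hpq i₀ j) hxp hyq
      have := congrArg Subtype.val hC
      simpa using this.symm
    · refine iSup_le fun j' => ?_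
      by_cases hjj : j' = j
      · subst hjj; exact Subgroup.le_normalizer
      · exact aux_le_normalizer_of_commute (fun x hx y hy => hQcomm j' j hjj x y hx hy)
  -- conjugate
  have hconjD : MulAut.conj g • D ≤ M := by
    refine le_trans ?_ hRM
    have h1 : MulAut.conj g • D ≤ MulAut.conj g • Subgroup.normalizer ((Q j : Subgroup G) : Set G) :=
      Subgroup.pointwise_smul_le_pointwise_smul_iff.mpr hDnorm
    rwa [aux_smul_normalizer, ← hReq] at h1
  have hconjCo : IsCoatom (MulAut.conj g • D) := by
    constructor
    · intro h
      apply hDne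
      have h2 := congrArg (fun S => (MulAut.conj g)⁻¹ • S) h
      simpa [aux_smul_top] using h2
    · intro X hX
      have hle : D ≤ (MulAut.conj g)⁻¹ • X := by
        have h2 := (Subgroup.pointwise_smul_le_pointwise_smul_iff
          (a := (MulAut.conj g)⁻¹)).mpr hX.le
        simpa using h2
      have hne : D ≠ (MulAut.conj g)⁻¹ • X := by
        intro h
        apply hX.ne
        have h2 := congrArg (fun S => MulAut.conj g • S) h
        simpa using h2
      have h3 := hDco.2 _ (lt_of_le_of_ne hle hne)
      have h4 := congrArg (fun S => MulAut.conj g • S) h3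
      simpa [aux_smul_top] using h4
  have hMeq : M = MulAut.conj g • D := by
    by_contra hne
    exact hM.1 (hconjCo.2 M (lt_of_le_of_ne hconjD (fun h => hne h.symm)))
  rw [hMeq]
  exact aux_smul_nilpotent g D hDnil
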